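/- Let T be the template (45312, 10101), and define the sequence (r_n) by r_0 = r_1 = 1 and, for n > 1, r_n = Σ_{i=1}^{n-1} Σ_{j=i+1}^{n} r_{i-1}·r_{j-i-1}·r_{n-j}. Then |R_{n,T}| = r_n for all n ≥ 0. -/

import Mathlib

/-- A *permutation word* of length `n`: a list that is a rearrangement of `1, 2, ..., n`
(where `n` is its length). -/
def IsPermWord (w : List ℕ) : Prop := w.Perm (List.range' 1 w.length)

/-- Two words are *order-isomorphic*: they have the same length and corresponding
entries compare in the same way. -/
def OrderIsoWord (u v : List ℕ) : Prop :=
  u.length = v.length ∧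
    ∀ (i j : ℕ) (hi : i < u.length) (hj : j < u.length)
      (hi' : i < v.length) (hj' : j < v.length),
      (u[i]'hi < u[j]'hj ↔ v[i]'hi' < v[j]'hj')

/-- `w` contains a copy of the pattern `σ`: some subsequence of `w` (given by increasing
indices) is order-isomorphic to `σ`. -/
def ContainsPattern (w σ : List ℕ) : Prop :=
  ∃ s : List ℕ, s.Sublist w ∧ OrderIsoWord s σ

/-- `w` avoids the pattern `σ`: it contains no copy of `σ`. -/
def AvoidsPattern (w σ : List ℕ) : Prop := ¬ ContainsPattern w σ

/-- Membership in the family of permutation-word sets `R_{n,T}` generated by the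
template `T = (P, B)` (the length index `n` is just the length of the word).
`InR P B w` holds iff `w` is the empty word, a single-letter word, or the
concatenation of subwords `W_1, ..., W_t` (`t = |P|`, total length at least `2`) such that:
whenever `p_i > p_j` every element of `W_i` exceeds every element of `W_j`;
each `W_i` is order-isomorphic to a permutation word `V_i` that again satisfies `InR`;
and whenever `b_i = 0` the subword `W_i` has exactly one element. -/
inductive InR (P : List ℕ) (B : List Bool) : List ℕ → Prop where
  | nil : InR P B []
  | single (x : ℕ) : InR P B [x]
  | join (Ws Vs : List (List ℕ)) (hlen : Ws.length = P.length)
      (hVs : Vs.length = Ws.length)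
      (h2 : 2 ≤ Ws.flatten.length)
      (horder : ∀ (i j : ℕ) (hi : i < Ws.length) (hj : j < Ws.length),
          P[j]'(by omega) < P[i]'(by omega) →
          ∀ x ∈ Ws[i]'hi, ∀ y ∈ Ws[j]'hj, y < x)
      (hiso : ∀ (i : ℕ) (hi : i < Ws.length),
          IsPermWord (Vs[i]'(by omega)) ∧ OrderIsoWord (Ws[i]'hi) (Vs[i]'(by omega)))
      (hrec : ∀ (i : ℕ) (hi : i < Vs.length), InR P B (Vs[i]'hi))
      (hzero : ∀ (i : ℕ) (hi : i < Ws.length) (hb : i < B.length),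
          B[i]'hb = false → (Ws[i]'hi).length = 1) :
      InR P B Ws.flatten

/-- The set `R_{n,T}` of permutation words of length `n` generated by the template `T = (P,B)`. -/
def Rset (P : List ℕ) (B : List Bool) (n : ℕ) : Set (List ℕ) :=
  {w | w.length = n ∧ IsPermWord w ∧ InR P B w}

namespace T45312

def Pl : List ℕ := [4, 5, 3, 1, 2]
def Bl : List Bool := [true, false, true, false, true]

def emb (u v x : List ℕ) : List ℕ :=
  u.map (· + (v.length + x.length + 1)) ++ [u.length + v.length + x.length + 2]
    ++ v.map (· + (x.length + 1)) ++ [1] ++ x.map (· + 1)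

lemma mem_bounds {u : List ℕ} (h : IsPermWord u) {y : ℕ} (hy : y ∈ u) :
    1 ≤ y ∧ y < u.length + 1 := by
  have := h.mem_iff.mp hy
  rw [List.mem_range'_1] at this; omega

lemma iso_map (u : List ℕ) (k : ℕ) : OrderIsoWord (u.map (· + k)) u := by
  refine ⟨by simp, fun i j hi hj hi' hj' => ?_⟩
  simp

lemma permword_single (x : ℕ) : IsPermWord [x] ↔ x = 1 := by
  constructor
  · intro h; simpa [IsPermWord] using h
  · rintro rfl; simp [IsPermWord]

lemma iso_single (a b : ℕ) : OrderIsoWord [a] [b] := by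
  refine ⟨rfl, fun i j hi hj hi' hj' => ?_⟩
  simp at hi hj; subst hi; subst hj; simp

lemma emb_InR {u v x : List ℕ} (hu : IsPermWord u) (hv : IsPermWord v) (hx : IsPermWord x)
    (hu' : InR Pl Bl u) (hv' : InR Pl Bl v) (hx' : InR Pl Bl x) :
    InR Pl Bl (emb u v x) := by
  set a := u.length with ha
  set b := v.length with hb
  set c := x.length with hc
  set A : List ℕ := u.map (· + (b + c + 1)) with hA
  set N : ℕ := a + b + c + 2 with hN
  set C : List ℕ := v.map (· + (c + 1)) with hC
  set E : List ℕ := x.map (· + 1) with hE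
  have heq : emb u v x = ([A, [N], C, [1], E] : List (List ℕ)).flatten := by
    simp [emb, hA, hC, hE, hN, ha, hb, hc]
  have bndA : ∀ z ∈ A, b + c + 2 ≤ z ∧ z ≤ a + b + c + 1 := by
    intro z hz; obtain ⟨y, hy, rfl⟩ := List.mem_map.mp hz
    have := mem_bounds hu hy; omega
  have bndC : ∀ z ∈ C, c + 2 ≤ z ∧ z ≤ b + c + 1 := by
    intro z hz; obtain ⟨y, hy, rfl⟩ := List.mem_map.mp hz
    have := mem_bounds hv hy; omega
  have bndE : ∀ z ∈ E, 2 ≤ z ∧ z ≤ c + 1 := by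
    intro z hz; obtain ⟨y, hy, rfl⟩ := List.mem_map.mp hz
    have := mem_bounds hx hy; omega
  rw [heq]
  refine InR.join [A, [N], C, [1], E] [u, [1], v, [1], x] (by simp [Pl]) (by simp) (by simp; omega)
    ?_ ?_ ?_ ?_
  · intro i j hi hj hP p hp q hq
    have hi5 : i < 5 := by simpa using hi
    have hj5 : j < 5 := by simpa using hj
    interval_cases i <;> interval_cases j <;>
      simp [Pl] at hP hp hq ⊢ <;>
      first
        | omega
        | (first
            | (have h1 := bndA p hp)
            | (have h1 := bndC p hp)
            | (have h1 := bndE p hp)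
            | (have h1 : p = N := hp)
            | skip) <;>
          (first
            | (have h2 := bndA q hq)
            | (have h2 := bndC q hq)
            | (have h2 := bndE q hq)
            | skip) <;>
          omega
  · intro i hi
    have hi5 : i < 5 := by simpa using hi
    interval_cases i
    · exact ⟨hu, by simpa using iso_map u (b + c + 1)⟩
    · exact ⟨(permword_single 1).mpr rfl, by simpa using iso_single N 1⟩
    · exact ⟨hv, by simpa using iso_map v (c + 1)⟩
    · exact ⟨(permword_single 1).mpr rfl, by simpa using iso_single 1 1⟩
    · exact ⟨hx, by simpa using iso_map x 1⟩
  · intro i hi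
    have hi5 : i < 5 := by simpa using hi
    interval_cases i
    · exact hu'
    · exact InR.single 1
    · exact hv'
    · exact InR.single 1
    · exact hx'
  · intro i hi hbl hfalse
    have hi5 : i < 5 := by simpa using hi
    interval_cases i <;> simp [Bl] at hfalse ⊢

lemma map_perm_range {u : List ℕ} (h : IsPermWord u) (k : ℕ) :
    (u.map (· + k)).Perm (List.range' (k + 1) u.length) := by
  have h1 : (u.map (· + k)).Perm ((List.range' 1 u.length).map (· + k)) := h.map _
  have h2 : (List.range' 1 u.length).map (· + k) = List.range' (k + 1) u.length := by
    have := List.map_add_range' (a := k) 1 u.length 1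
    simpa [Nat.add_comm] using this
  rwa [h2] at h1

lemma range'_one_append (m k : ℕ) :
    List.range' 1 m ++ List.range' (m + 1) k = List.range' 1 (m + k) := by
  simpa [Nat.add_comm] using List.range'_append (s := 1) (m := m) (n := k) (step := 1)

lemma range'_split (a b c : ℕ) :
    List.range' 1 (a + b + c + 2) =
      [1] ++ List.range' 2 c ++ List.range' (c + 2) b ++ List.range' (b + c + 2) a
        ++ [a + b + c + 2] := by
  have e1 : [1] = List.range' 1 1 := by simp
  have e2 : [a + b + c + 2] = List.range' (a + b + c + 2) 1 := by simp
  rw [e1, e2, range'_one_append]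
  rw [show (1 + c) = c + 1 by omega, show c + 2 = (c+1) + 1 by omega, range'_one_append]
  rw [show c + 1 + b = b + c + 1 by omega, show b + c + 2 = (b+c+1)+1 by omega, range'_one_append]
  rw [show b + c + 1 + a = a+b+c+1 by omega, show a+b+c+2 = (a+b+c+1)+1 by omega, range'_one_append]

lemma emb_perm {u v x : List ℕ} (hu : IsPermWord u) (hv : IsPermWord v) (hx : IsPermWord x) :
    IsPermWord (emb u v x) := by
  unfold IsPermWord
  have hlen : (emb u v x).length = u.length + v.length + x.length + 2 := by
    simp [emb]; omega
  rw [hlen]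
  rw [range'_split u.length v.length x.length]
  rw [← Multiset.coe_eq_coe]
  have hA := (map_perm_range hu (v.length + x.length + 1))
  have hC := (map_perm_range hv (x.length + 1))
  have hE := (map_perm_range hx 1)
  have mA : (↑(u.map (· + (v.length + x.length + 1))) : Multiset ℕ)
      = ↑(List.range' (v.length + x.length + 2) u.length) := by
    rw [Multiset.coe_eq_coe]; simpa [Nat.add_comm, Nat.add_assoc, Nat.add_left_comm] using hA
  have mC : (↑(v.map (· + (x.length + 1))) : Multiset ℕ)
      = ↑(List.range' (x.length + 2) v.length) := by
    rw [Multiset.coe_eq_coe]; simpa [Nat.add_comm, Nat.add_assoc, Nat.add_left_comm] using hC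
  have mE : (↑(x.map (· + 1)) : Multiset ℕ) = ↑(List.range' 2 x.length) := by
    rw [Multiset.coe_eq_coe]; simpa using hE
  simp only [emb, ← Multiset.coe_add, mA, mC, mE]
  abel

lemma rank_eq {L : List ℕ} {s : ℕ} (h : L.Perm (List.range' s L.length))
    {i : ℕ} (hi : i < L.length) :
    L[i] = s + ((Finset.range L.length).filter (fun j => L.getD j 0 < L[i])).card := by
  have hnd : L.Nodup := h.nodup_iff.mpr (List.nodup_range' (s := s) (n := L.length))
  have hmemL : ∀ z ∈ L, s ≤ z ∧ z < s + L.length := by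
    intro z hz; have := h.mem_iff.mp hz; rw [List.mem_range'_1] at this; omega
  have hcard : ((Finset.range L.length).filter (fun j => L.getD j 0 < L[i])).card
      = (Finset.Ico s L[i]).card := by
    apply Finset.card_nbij (fun j => L.getD j 0)
    · intro j hj
      simp only [Finset.mem_coe, Finset.mem_filter, Finset.mem_range] at hj
      obtain ⟨hj1, hj2⟩ := hj
      beta_reduce
      rw [List.getD_eq_getElem L 0 hj1] at hj2 ⊢
      have := hmemL _ (List.getElem_mem hj1)
      simp only [Finset.mem_coe, Finset.mem_Ico]; omega
    · intro j1 hj1 j2 hj2 hEq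
      simp only [Finset.coe_filter, Set.mem_setOf_eq, Finset.mem_range] at hj1 hj2
      have hEq' : L.getD j1 0 = L.getD j2 0 := hEq
      rw [List.getD_eq_getElem L 0 hj1.1, List.getD_eq_getElem L 0 hj2.1] at hEq'
      exact (hnd.getElem_inj_iff).mp hEq'
    · intro z hz
      simp only [Finset.coe_Ico, Set.mem_Ico] at hz
      have hzL : z ∈ L := by
        apply h.mem_iff.mpr
        rw [List.mem_range'_1]
        have := hmemL _ (List.getElem_mem hi)
        constructor; omega; omega
      obtain ⟨j, hj, hjz⟩ := List.mem_iff_getElem.mp hzL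
      refine ⟨j, ?_, ?_⟩
      · simp only [Finset.coe_filter, Set.mem_setOf_eq, Finset.mem_range]
        rw [List.getD_eq_getElem L 0 hj, hjz]
        exact ⟨hj, hz.2⟩
      · show L.getD j 0 = z
        rw [List.getD_eq_getElem L 0 hj, hjz]
  rw [hcard, Nat.card_Ico]
  have := hmemL _ (List.getElem_mem hi)
  omega

lemma eq_map_of_iso {w v : List ℕ} {k : ℕ}
    (hw : w.Perm (List.range' (k + 1) w.length)) (hv : IsPermWord v)
    (hiso : OrderIsoWord w v) : w = v.map (· + k) := by
  obtain ⟨hlen, hcmp⟩ := hiso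
  apply List.ext_getElem (by simp [hlen])
  intro i hi hi'
  have hiv : i < v.length := by omega
  have hrw := rank_eq hw hi
  have hrv := rank_eq (s := 1) (by simpa [IsPermWord, hlen] using hv) hiv
  have hfilter : ((Finset.range w.length).filter (fun j => w.getD j 0 < w[i])) =
      ((Finset.range v.length).filter (fun j => v.getD j 0 < v[i]'hiv)) := by
    rw [← hlen]
    apply Finset.filter_congr
    intro j hj
    simp only [Finset.mem_range] at hj
    rw [List.getD_eq_getElem w 0 hj, List.getD_eq_getElem v 0 (by omega)]
    exact hcmp j i hj hi (by omega) hiv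
  have hrw' : w[i] = k + 1 + ((Finset.range v.length).filter
      (fun j => v.getD j 0 < v[i]'hiv)).card := by
    rw [hrw, hfilter]
  simp only [List.getElem_map]
  omega

lemma perm_split {A B : List ℕ} {k m : ℕ}
    (hperm : (A ++ B).Perm (List.range' k m)) (hord : ∀ x ∈ A, ∀ y ∈ B, y < x) :
    B.Perm (List.range' k B.length) ∧ A.Perm (List.range' (k + B.length) A.length) := by
  have hm : m = A.length + B.length := by
    have := hperm.length_eq; simp at this; omega
  have hnd : (A ++ B).Nodup := hperm.nodup_iff.mpr (List.nodup_range' (s := k) (n := m))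
  have hndB : B.Nodup := (List.nodup_append.mp hnd).2.1
  have hcardB : B.toFinset.card = B.length := List.toFinset_card_of_nodup hndB
  have hmem : ∀ z ∈ A ++ B, k ≤ z ∧ z < k + m := by
    intro z hz; have := hperm.mem_iff.mp hz; rw [List.mem_range'_1] at this; omega
  have hBiff : ∀ z, z ∈ B ↔ k ≤ z ∧ z < k + B.length := by
    intro z
    constructor
    · intro hz
      have h1 := hmem z (List.mem_append_right A hz)
      refine ⟨h1.1, ?_⟩
      by_contra hge
      push_neg at hge
      have hsub : Finset.Ico k (z + 1) ⊆ B.toFinset := by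
        intro v hv
        simp only [Finset.mem_Ico] at hv
        have hvm : v ∈ A ++ B := by
          apply hperm.mem_iff.mpr; rw [List.mem_range'_1]; omega
        rcases List.mem_append.mp hvm with hvA | hvB
        · exact absurd (hord v hvA z hz) (by omega)
        · simpa using hvB
      have := Finset.card_le_card hsub
      rw [hcardB, Nat.card_Ico] at this
      omega
    · rintro ⟨h1, h2⟩
      have hzm : z ∈ A ++ B := by
        apply hperm.mem_iff.mpr; rw [List.mem_range'_1]; omega
      rcases List.mem_append.mp hzm with hzA | hzB
      · exfalso
        have hsub : B.toFinset ⊆ Finset.Ico k z := by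
          intro v hv
          simp only [List.mem_toFinset] at hv
          have := hord z hzA v hv
          have := hmem v (List.mem_append_right A hv)
          simp only [Finset.mem_Ico]; omega
        have := Finset.card_le_card hsub
        rw [hcardB, Nat.card_Ico] at this
        omega
      · exact hzB
  have hBperm : B.Perm (List.range' k B.length) := by
    apply List.perm_of_nodup_nodup_toFinset_eq hndB (List.nodup_range' (s := k) (n := B.length))
    ext z
    simp only [List.mem_toFinset, hBiff z, List.mem_range'_1]
  refine ⟨hBperm, ?_⟩
  have hsplit : List.range' k B.length ++ List.range' (k + B.length) A.length
      = List.range' k m := by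
    have := List.range'_append (s := k) (m := B.length) (n := A.length) (step := 1)
    simpa [hm, Nat.add_comm] using this
  have h1 : (A ++ B).Perm (List.range' (k + B.length) A.length ++ List.range' k B.length) := by
    refine hperm.trans ?_
    rw [← hsplit]
    exact List.perm_append_comm
  have h2 : (A ++ B).Perm (A ++ List.range' k B.length) := List.Perm.append_left A hBperm
  have h3 : (A ++ List.range' k B.length).Perm
      (List.range' (k + B.length) A.length ++ List.range' k B.length) := h2.symm.trans h1
  exact (List.perm_append_right_iff _).mp h3

lemma decomp {w : List ℕ} (hlen2 : 2 ≤ w.length) (hw : IsPermWord w)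
    (hR : InR Pl Bl w) :
    ∃ u v x : List ℕ, IsPermWord u ∧ IsPermWord v ∧ IsPermWord x ∧
      InR Pl Bl u ∧ InR Pl Bl v ∧ InR Pl Bl x ∧
      u.length + v.length + x.length + 2 = w.length ∧ w = emb u v x := by
  cases hR with
  | nil => simp at hlen2
  | single y => simp at hlen2
  | join Ws Vs hlen hVs h2 horder hiso hrec hzero =>
    have hlen5 : Ws.length = 5 := by simpa [Pl] using hlen
    clear h2 hlen2
    obtain ⟨W1, W2, W3, W4, W5, rfl⟩ :
        ∃ W1 W2 W3 W4 W5, Ws = [W1, W2, W3, W4, W5] := by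
      rcases Ws with _ | ⟨W1, _ | ⟨W2, _ | ⟨W3, _ | ⟨W4, _ | ⟨W5, _ | ⟨W6, rest⟩⟩⟩⟩⟩⟩ <;>
        first
          | (exact ⟨_, _, _, _, _, rfl⟩)
          | (exfalso; simp at hlen5)
          | (exfalso; simp at hlen5; omega)
    have hVs5 : Vs.length = 5 := by simpa using hVs
    obtain ⟨V1, V2, V3, V4, V5, rfl⟩ :
        ∃ V1 V2 V3 V4 V5, Vs = [V1, V2, V3, V4, V5] := by
      rcases Vs with _ | ⟨V1, _ | ⟨V2, _ | ⟨V3, _ | ⟨V4, _ | ⟨V5, _ | ⟨V6, rest⟩⟩⟩⟩⟩⟩ <;>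
        first
          | (exact ⟨_, _, _, _, _, rfl⟩)
          | (exfalso; simp at hVs5)
          | (exfalso; simp at hVs5; omega)
    obtain ⟨m2, rfl⟩ : ∃ m2, W2 = [m2] := by
      have := hzero 1 (by simp) (by simp [Bl]) (by simp [Bl])
      simp only [List.getElem_cons_succ, List.getElem_cons_zero] at this
      exact List.length_eq_one_iff.mp this
    obtain ⟨m4, rfl⟩ : ∃ m4, W4 = [m4] := by
      have := hzero 3 (by simp) (by simp [Bl]) (by simp [Bl])
      simp only [List.getElem_cons_succ, List.getElem_cons_zero] at this
      exact List.length_eq_one_iff.mp this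
    set a := W1.length with haW
    set b := W3.length with hbW
    set c := W5.length with hcW
    have hword : ([W1, [m2], W3, [m4], W5] : List (List ℕ)).flatten
        = W1 ++ [m2] ++ W3 ++ [m4] ++ W5 := by simp
    have hwlen : (([W1, [m2], W3, [m4], W5] : List (List ℕ)).flatten).length
        = a + b + c + 2 := by
      rw [hword]; simp; omega
    -- the ten order facts
    have h31 : ∀ p ∈ W1, ∀ q ∈ W3, q < p := by
      have := horder 0 2 (by simp) (by simp) (by norm_num [Pl]); simpa using this
    have h41 : ∀ p ∈ W1, m4 < p := by
      have := horder 0 3 (by simp) (by simp) (by norm_num [Pl]); simpa using this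
    have h51 : ∀ p ∈ W1, ∀ q ∈ W5, q < p := by
      have := horder 0 4 (by simp) (by simp) (by norm_num [Pl]); simpa using this
    have h12 : ∀ q ∈ W1, q < m2 := by
      have := horder 1 0 (by simp) (by simp) (by norm_num [Pl]); simpa using this
    have h32 : ∀ q ∈ W3, q < m2 := by
      have := horder 1 2 (by simp) (by simp) (by norm_num [Pl]); simpa using this
    have h42 : m4 < m2 := by
      have := horder 1 3 (by simp) (by simp) (by norm_num [Pl]); simpa using this
    have h52 : ∀ q ∈ W5, q < m2 := by
      have := horder 1 4 (by simp) (by simp) (by norm_num [Pl]); simpa using this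
    have h43 : ∀ p ∈ W3, m4 < p := by
      have := horder 2 3 (by simp) (by simp) (by norm_num [Pl]); simpa using this
    have h53 : ∀ p ∈ W3, ∀ q ∈ W5, q < p := by
      have := horder 2 4 (by simp) (by simp) (by norm_num [Pl]); simpa using this
    have h45 : ∀ p ∈ W5, m4 < p := by
      have := horder 4 3 (by simp) (by simp) (by norm_num [Pl]); simpa using this
    -- identify m2 and m4
    have hm2mem : m2 ∈ ([W1, [m2], W3, [m4], W5] : List (List ℕ)).flatten := by
      rw [hword]; simp
    have hm4mem : m4 ∈ ([W1, [m2], W3, [m4], W5] : List (List ℕ)).flatten := by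
      rw [hword]; simp
    have hm2b := mem_bounds hw hm2mem
    have hm4b := mem_bounds hw hm4mem
    rw [hwlen] at hm2b hm4b
    have hm2 : m2 = a + b + c + 2 := by
      have hnm : (a + b + c + 2) ∈ ([W1, [m2], W3, [m4], W5] : List (List ℕ)).flatten := by
        apply hw.mem_iff.mpr
        rw [hwlen, List.mem_range'_1]; omega
      rw [hword] at hnm
      simp only [List.mem_append, List.mem_singleton] at hnm
      rcases hnm with ((((h | h) | h) | h) | h)
      · have := h12 _ h; omega
      · omega
      · have := h32 _ h; omega
      · omega
      · have := h52 _ h; omega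
    have hm4 : m4 = 1 := by
      have hnm : (1 : ℕ) ∈ ([W1, [m2], W3, [m4], W5] : List (List ℕ)).flatten := by
        apply hw.mem_iff.mpr
        rw [hwlen, List.mem_range'_1]; omega
      rw [hword] at hnm
      simp only [List.mem_append, List.mem_singleton] at hnm
      rcases hnm with ((((h | h) | h) | h) | h)
      · have := h41 _ h; omega
      · omega
      · have := h43 _ h; omega
      · omega
      · have := h45 _ h; omega
    -- peel off the extremes
    have hperm : (([W1, [m2], W3, [m4], W5] : List (List ℕ)).flatten).Perm
        (List.range' 1 (a + b + c + 2)) := by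
      have h := hw
      unfold IsPermWord at h
      rwa [hwlen] at h
    have hrsplit : List.range' 1 (a + b + c + 2)
        = [1] ++ List.range' 2 (a + b + c) ++ [a + b + c + 2] := by
      have e1 : ([1] : List ℕ) = List.range' 1 1 := by simp
      have e2 : ([a + b + c + 2] : List ℕ) = List.range' (a + b + c + 1 + 1) 1 := by
        norm_num
      rw [e1, e2, range'_one_append, show 1 + (a+b+c) = a+b+c+1 by omega, range'_one_append]
    have key : (W1 ++ (W3 ++ W5)).Perm (List.range' 2 (a + b + c)) := by
      have h1 : (([m4] ++ [m2]) ++ (W1 ++ (W3 ++ W5))).Perm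
          (([W1, [m2], W3, [m4], W5] : List (List ℕ)).flatten) := by
        rw [← Multiset.coe_eq_coe, hword]
        simp only [← Multiset.coe_add]
        abel
      have h3 : (([m4] ++ [m2]) ++ (W1 ++ (W3 ++ W5))).Perm
          (([m4] ++ [m2]) ++ List.range' 2 (a + b + c)) := by
        refine (h1.trans hperm).trans ?_
        rw [hrsplit, hm2, hm4, ← Multiset.coe_eq_coe]
        simp only [← Multiset.coe_add]
        abel
      exact (List.perm_append_left_iff _).mp h3
    have hordsplit : ∀ p ∈ W1, ∀ q ∈ W3 ++ W5, q < p := by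
      intro p hp q hq
      rcases List.mem_append.mp hq with h | h
      · exact h31 p hp q h
      · exact h51 p hp q h
    obtain ⟨hlow, hW1p⟩ := perm_split key hordsplit
    rw [List.length_append, ← hbW, ← hcW] at hlow hW1p
    obtain ⟨hW5p, hW3p⟩ := perm_split hlow h53
    rw [← hcW] at hW5p hW3p
    rw [← hbW] at hW3p
    rw [← haW] at hW1p
    -- isomorphic standardizations
    have hi0 := hiso 0 (by simp)
    have hi2 := hiso 2 (by simp)
    have hi4 := hiso 4 (by simp)
    simp only [List.getElem_cons_zero, List.getElem_cons_succ] at hi0 hi2 hi4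
    have hV1l : V1.length = a := by rw [← hi0.2.1]
    have hV3l : V3.length = b := by rw [← hi2.2.1]
    have hV5l : V5.length = c := by rw [← hi4.2.1]
    have hW1eq : W1 = V1.map (· + (b + c + 1)) := by
      apply eq_map_of_iso ?_ hi0.1 hi0.2
      rw [← haW, show b + c + 1 + 1 = 2 + (b + c) by omega]
      exact hW1p
    have hW3eq : W3 = V3.map (· + (c + 1)) := by
      apply eq_map_of_iso ?_ hi2.1 hi2.2
      rw [← hbW, show c + 1 + 1 = 2 + c by omega]
      exact hW3p
    have hW5eq : W5 = V5.map (· + 1) := by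
      apply eq_map_of_iso ?_ hi4.1 hi4.2
      rw [← hcW, show 1 + 1 = 2 by omega]
      exact hW5p
    have hr0 : InR Pl Bl V1 := by have := hrec 0 (by simp); simpa using this
    have hr2 : InR Pl Bl V3 := by have := hrec 2 (by simp); simpa using this
    have hr4 : InR Pl Bl V5 := by have := hrec 4 (by simp); simpa using this
    refine ⟨V1, V3, V5, hi0.1, hi2.1, hi4.1, hr0, hr2, hr4, ?_, ?_⟩
    · rw [hV1l, hV3l, hV5l, hwlen]
    · have hembeq : emb V1 V3 V5 = V1.map (· + (b + c + 1)) ++ [a + b + c + 2]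
          ++ V3.map (· + (c + 1)) ++ [1] ++ V5.map (· + 1) := by
        simp only [emb, hV1l, hV3l, hV5l]
      rw [hembeq, hword, ← hW1eq, ← hW3eq, ← hW5eq, hm2, hm4]

lemma append_det {α : Type*} (A : List α) :
    ∀ (A' R R' : List α) (t : α), A ++ t :: R = A' ++ t :: R' →
      t ∉ A → t ∉ A' → A = A' ∧ R = R' := by
  induction A with
  | nil =>
    intro A' R R' t h h1 h2
    cases A' with
    | nil => simpa using h
    | cons a' T' =>
      simp only [List.nil_append, List.cons_append, List.cons.injEq] at h
      exact absurd (h.1 ▸ List.mem_cons_self (a := a') (l := T')) h2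
  | cons a T ih =>
    intro A' R R' t h h1 h2
    cases A' with
    | nil =>
      simp only [List.nil_append, List.cons_append, List.cons.injEq] at h
      exact absurd (h.1 ▸ List.mem_cons_self (a := a) (l := T)) h1
    | cons a' T' =>
      simp only [List.cons_append, List.cons.injEq] at h
      obtain ⟨rfl, h⟩ := h
      obtain ⟨h3, h4⟩ := ih T' R R' t h (fun hx => h1 (List.mem_cons_of_mem _ hx))
        (fun hx => h2 (List.mem_cons_of_mem _ hx))
      exact ⟨by rw [h3], h4⟩

lemma emb_eq_alt (u v x : List ℕ) :
    emb u v x = u.map (· + (v.length + x.length + 1)) ++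
      ((u.length + v.length + x.length + 2) ::
        (v.map (· + (x.length + 1)) ++ (1 :: x.map (· + 1)))) := by
  simp [emb]

lemma emb_length (u v x : List ℕ) :
    (emb u v x).length = u.length + v.length + x.length + 2 := by
  simp [emb]; omega

lemma emb_inj {u v x u' v' x' : List ℕ}
    (hu : IsPermWord u) (hv : IsPermWord v) (hx : IsPermWord x)
    (hu' : IsPermWord u') (hv' : IsPermWord v') (hx' : IsPermWord x')
    (h : emb u v x = emb u' v' x') : u = u' ∧ v = v' ∧ x = x' := by
  have hn : u.length + v.length + x.length = u'.length + v'.length + x'.length := by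
    have := congrArg List.length h
    rw [emb_length, emb_length] at this; omega
  set n : ℕ := u.length + v.length + x.length + 2 with hndef
  rw [emb_eq_alt, emb_eq_alt] at h
  rw [← hn] at h
  have hA := append_det _ _ _ _ _ h
    (by intro hmem
        obtain ⟨y, hy, hEq⟩ := List.mem_map.mp hmem
        have := mem_bounds hu hy; omega)
    (by intro hmem
        obtain ⟨y, hy, hEq⟩ := List.mem_map.mp hmem
        have := mem_bounds hu' hy; omega)
  obtain ⟨hA1, hA2⟩ := hA
  have hul : u.length = u'.length := by
    have := congrArg List.length hA1; simpa using this
  have hB := append_det _ _ _ _ _ hA2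
    (by intro hmem
        obtain ⟨y, hy, hEq⟩ := List.mem_map.mp hmem
        have := mem_bounds hv hy; omega)
    (by intro hmem
        obtain ⟨y, hy, hEq⟩ := List.mem_map.mp hmem
        have := mem_bounds hv' hy; omega)
  obtain ⟨hB1, hB2⟩ := hB
  have hvl : v.length = v'.length := by
    have := congrArg List.length hB1; simpa using this
  have hxl : x.length = x'.length := by omega
  refine ⟨?_, ?_, ?_⟩
  · rw [hvl, hxl] at hA1
    exact List.map_injective_iff.mpr (fun p q hpq => by omega) hA1
  · rw [hxl] at hB1
    exact List.map_injective_iff.mpr (fun p q hpq => by omega) hB1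
  · exact List.map_injective_iff.mpr (fun p q hpq => by omega) hB2


lemma rset_finite (n : ℕ) : (Rset Pl Bl n).Finite := by
  apply Set.Finite.subset ((List.range' 1 n).permutations).finite_toSet
  intro w hw
  obtain ⟨h1, h2, _⟩ := hw
  simp only [List.coe_toFinset, Set.mem_setOf_eq, List.mem_permutations]
  rw [← h1]
  exact h2

lemma rset_zero : Rset Pl Bl 0 = {([] : List ℕ)} := by
  ext w
  constructor
  · rintro ⟨h1, _, _⟩
    simpa using List.length_eq_zero_iff.mp h1
  · rintro rfl
    exact ⟨rfl, by simp [IsPermWord], InR.nil⟩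

lemma rset_one : Rset Pl Bl 1 = {([1] : List ℕ)} := by
  ext w
  constructor
  · rintro ⟨h1, h2, _⟩
    obtain ⟨y, rfl⟩ := List.length_eq_one_iff.mp h1
    have : y = 1 := (permword_single y).mp h2
    simp [this]
  · rintro rfl
    exact ⟨rfl, (permword_single 1).mpr rfl, InR.single 1⟩

lemma mem_emb_Rset {u v x : List ℕ}
    (hu : u ∈ Rset Pl Bl u.length) (hv : v ∈ Rset Pl Bl v.length)
    (hx : x ∈ Rset Pl Bl x.length) :
    emb u v x ∈ Rset Pl Bl (u.length + v.length + x.length + 2) := by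
  obtain ⟨-, hu2, hu3⟩ := hu
  obtain ⟨-, hv2, hv3⟩ := hv
  obtain ⟨-, hx2, hx3⟩ := hx
  exact ⟨emb_length u v x, emb_perm hu2 hv2 hx2, emb_InR hu2 hv2 hx2 hu3 hv3 hx3⟩

lemma main_card (r : ℕ → ℕ)
    (h0 : r 0 = 1) (h1 : r 1 = 1)
    (hr : ∀ n, 1 < n → r n = ∑ i ∈ Finset.Icc 1 (n - 1), ∑ j ∈ Finset.Icc (i + 1) n,
      r (i - 1) * r (j - i - 1) * r (n - j)) :
    ∀ n : ℕ, (Rset Pl Bl n).ncard = r n := by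
  intro n
  induction n using Nat.strong_induction_on with
  | _ n IH =>
    match n with
    | 0 => rw [rset_zero, Set.ncard_singleton, h0]
    | 1 => rw [rset_one, Set.ncard_singleton, h1]
    | (m + 2) =>
      classical
      set N := m + 2 with hNdef
      have hN : 2 ≤ N := by omega
      have hRFcard : ∀ k, ((rset_finite k).toFinset).card = (Rset Pl Bl k).ncard :=
        fun k => (Set.ncard_eq_toFinset_card _ (rset_finite k)).symm
      set T : Finset ((_ : ℕ) × ℕ) :=
        (Finset.Icc 1 (N - 1)).sigma (fun i => Finset.Icc (i + 1) N) with hT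
      set G : ((_ : ℕ) × ℕ) → Finset (List ℕ) := fun p =>
        (((rset_finite (p.1 - 1)).toFinset ×ˢ ((rset_finite (p.2 - p.1 - 1)).toFinset
          ×ˢ (rset_finite (N - p.2)).toFinset)).image
            (fun q => emb q.1 q.2.1 q.2.2)) with hG
    -- the covering identity
      have hcover : (rset_finite N).toFinset = T.biUnion G := by
        ext w
        simp only [Set.Finite.mem_toFinset, Finset.mem_biUnion, hT, hG,
          Finset.mem_sigma, Finset.mem_Icc, Finset.mem_image, Finset.mem_product]
        constructor
        · intro hw
          obtain ⟨hwl, hperm, hin⟩ := hw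
          obtain ⟨u, v, x, hu1, hv1, hx1, hu3, hv3, hx3, hsum, hemb⟩ :=
            decomp (by omega) hperm hin
          have hsum' : u.length + v.length + x.length + 2 = N := by omega
          refine ⟨⟨u.length + 1, u.length + v.length + 2⟩, ⟨⟨?_, ?_⟩, ?_, ?_⟩,
            ⟨u, v, x⟩, ⟨?_, ?_, ?_⟩, hemb.symm⟩
          · show 1 ≤ u.length + 1; omega
          · show u.length + 1 ≤ N - 1; omega
          · show u.length + 1 + 1 ≤ u.length + v.length + 2; omega
          · show u.length + v.length + 2 ≤ N; omega
          · show u ∈ Rset Pl Bl (u.length + 1 - 1)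
            rw [show u.length + 1 - 1 = u.length from by omega]
            exact ⟨rfl, hu1, hu3⟩
          · show v ∈ Rset Pl Bl (u.length + v.length + 2 - (u.length + 1) - 1)
            rw [show u.length + v.length + 2 - (u.length + 1) - 1 = v.length from by omega]
            exact ⟨rfl, hv1, hv3⟩
          · show x ∈ Rset Pl Bl (N - (u.length + v.length + 2))
            rw [show N - (u.length + v.length + 2) = x.length from by omega]
            exact ⟨rfl, hx1, hx3⟩
        · rintro ⟨⟨i, j⟩, ⟨hij1, hij2⟩, ⟨u, v, x⟩, ⟨hu, hv, hx⟩, rfl⟩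
          have hij1' : 1 ≤ i ∧ i ≤ N - 1 := hij1
          have hij2' : i + 1 ≤ j ∧ j ≤ N := hij2
          have hul : u.length = i - 1 := hu.1
          have hvl : v.length = j - i - 1 := hv.1
          have hxl : x.length = N - j := hx.1
          have hu' : u ∈ Rset Pl Bl u.length := by rw [hul]; exact hu
          have hv' : v ∈ Rset Pl Bl v.length := by rw [hvl]; exact hv
          have hx' : x ∈ Rset Pl Bl x.length := by rw [hxl]; exact hx
          have := mem_emb_Rset hu' hv' hx'
          rwa [show u.length + v.length + x.length + 2 = N from by omega] at this
      -- disjointness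
      have hdisj : ∀ p ∈ T, ∀ q ∈ T, p ≠ q → Disjoint (G p) (G q) := by
        intro p hp q hq hne
        rw [Finset.disjoint_left]
        intro w hw1 hw2
        simp only [hG, Finset.mem_image, Finset.mem_product] at hw1 hw2
        obtain ⟨⟨u, v, x⟩, ⟨hu, hv, hx⟩, hemb1⟩ := hw1
        obtain ⟨⟨u', v', x'⟩, ⟨hu', hv', hx'⟩, hemb2⟩ := hw2
        rw [Set.Finite.mem_toFinset] at hu hv hx hu' hv' hx'
        have hEq : emb u v x = emb u' v' x' := by rw [hemb1, hemb2]
        obtain ⟨rfl, rfl, rfl⟩ := emb_inj hu.2.1 hv.2.1 hx.2.1 hu'.2.1 hv'.2.1 hx'.2.1 hEq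
        simp only [hT, Finset.mem_sigma, Finset.mem_Icc] at hp hq
        apply hne
        have e1 : u.length = p.1 - 1 := hu.1
        have e2 : v.length = p.2 - p.1 - 1 := hv.1
        have e3 : u.length = q.1 - 1 := hu'.1
        have e4 : v.length = q.2 - q.1 - 1 := hv'.1
        have hp1 : p.1 = q.1 := by omega
        have hp2 : p.2 = q.2 := by omega
        exact Sigma.ext hp1 (heq_of_eq hp2)
      -- cardinality of each piece
      have hGcard : ∀ p ∈ T, (G p).card
          = r (p.1 - 1) * (r (p.2 - p.1 - 1) * r (N - p.2)) := by
        intro p hp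
        simp only [hT, Finset.mem_sigma, Finset.mem_Icc] at hp
        have hinj : Set.InjOn (fun q : List ℕ × List ℕ × List ℕ => emb q.1 q.2.1 q.2.2)
            (((rset_finite (p.1 - 1)).toFinset ×ˢ ((rset_finite (p.2 - p.1 - 1)).toFinset
              ×ˢ (rset_finite (N - p.2)).toFinset) : Finset (List ℕ × List ℕ × List ℕ)) :
                Set (List ℕ × List ℕ × List ℕ)) := by
          rintro ⟨u, v, x⟩ hq1 ⟨u', v', x'⟩ hq2 hEq
          simp only [Finset.coe_product, Set.mem_prod, Set.Finite.coe_toFinset] at hq1 hq2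
          obtain ⟨rfl, rfl, rfl⟩ := emb_inj hq1.1.2.1 hq1.2.1.2.1 hq1.2.2.2.1
            hq2.1.2.1 hq2.2.1.2.1 hq2.2.2.2.1 hEq
          rfl
        rw [hG]
        rw [Finset.card_image_of_injOn hinj, Finset.card_product, Finset.card_product]
        rw [hRFcard, hRFcard, hRFcard]
        rw [IH (p.1 - 1) (by omega), IH (p.2 - p.1 - 1) (by omega), IH (N - p.2) (by omega)]
      rw [Set.ncard_eq_toFinset_card _ (rset_finite N), hcover,
        Finset.card_biUnion hdisj, hr N (by omega)]
      rw [Finset.sum_congr rfl hGcard, hT, Finset.sum_sigma]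
      exact Finset.sum_congr rfl fun i _ => Finset.sum_congr rfl fun j _ => by ring

end T45312

/-- Let `T` be the template `(45312, 10101)` and let `r 0 = r 1 = 1` and,
for `n > 1`, `r n = ∑_{i=1}^{n-1} ∑_{j=i+1}^{n} r (i-1) * r (j-i-1) * r (n-j)`.  Then
`|R_{n,T}| = r n` for all `n ≥ 0`. -/
theorem template_45312_card (r : ℕ → ℕ)
    (h0 : r 0 = 1) (h1 : r 1 = 1)
    (hrec : ∀ n, 1 < n → r n = ∑ i ∈ Finset.Icc 1 (n - 1), ∑ j ∈ Finset.Icc (i + 1) n,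
      r (i - 1) * r (j - i - 1) * r (n - j))
    (n : ℕ) :
    Nat.card (Rset [4, 5, 3, 1, 2] [true, false, true, false, true] n) = r n := by
  rw [Nat.card_coe_set_eq]
  exact T45312.main_card r h0 h1 hrec n
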